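/- The trace of σ(ξ) = |ξ|^{−2}(ε(ξ)ι(ξ) − ι(ξ)ε(ξ)) acting on Λᵐ V* equals 2·A_{n,m−1} − C(n,m), where A_{n,m−1} = Σ_{j=0}^{m−1}(−1)^j C(n, m−1−j), independently of the nonzero covector ξ. -/

import Mathlib

noncomputable section

open ExteriorAlgebra
open scoped RealInnerProductSpace

abbrev Vn (n : ℕ) := EuclideanSpace ℝ (Fin n)

variable {n : ℕ}

def eps (ξ : Vn n) : ExteriorAlgebra ℝ (Vn n) →ₗ[ℝ] ExteriorAlgebra ℝ (Vn n) :=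
  LinearMap.mulLeft ℝ (ExteriorAlgebra.ι ℝ ξ)

def iot (ξ : Vn n) : ExteriorAlgebra ℝ (Vn n) →ₗ[ℝ] ExteriorAlgebra ℝ (Vn n) :=
  CliffordAlgebra.contractLeft (Q := (0 : QuadraticForm ℝ (Vn n)))
    (innerSL ℝ ξ).toLinearMap

lemma eps_mem (ξ : Vn n) (m : ℕ) :
    ∀ x ∈ ⋀[ℝ]^m (Vn n), eps ξ x ∈ ⋀[ℝ]^(m+1) (Vn n) := by
  intro x hx
  rw [exteriorPower, pow_succ']
  exact Submodule.mul_mem_mul ⟨ξ, rfl⟩ hx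

lemma iot_zero_mem (ξ : Vn n) :
    ∀ x ∈ ⋀[ℝ]^0 (Vn n), iot ξ x = 0 := by
  intro x hx
  rw [exteriorPower, pow_zero, Submodule.one_eq_range] at hx
  obtain ⟨r, rfl⟩ := hx
  exact CliffordAlgebra.contractLeft_algebraMap
    (Q := (0 : QuadraticForm ℝ (Vn n))) (innerSL ℝ ξ).toLinearMap r

lemma iot_mem (ξ : Vn n) (m : ℕ) :
    ∀ x ∈ ⋀[ℝ]^(m+1) (Vn n), iot ξ x ∈ ⋀[ℝ]^m (Vn n) := by
  induction m with
  | zero =>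
    intro x hx
    rw [exteriorPower, pow_one] at hx
    obtain ⟨v, rfl⟩ := hx
    rw [iot, CliffordAlgebra.contractLeft_ι]
    exact Submodule.algebraMap_mem _
  | succ k ih =>
    intro x hx
    rw [exteriorPower, pow_succ'] at hx
    refine Submodule.mul_induction_on hx ?_ ?_
    · rintro a ⟨v, rfl⟩ b hb
      rw [iot, CliffordAlgebra.contractLeft_ι_mul]
      refine sub_mem (Submodule.smul_mem _ _ hb) ?_
      rw [exteriorPower, pow_succ']
      exact Submodule.mul_mem_mul ⟨v, rfl⟩ (ih b hb)
    · intro x y hx hy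
      rw [map_add]
      exact add_mem hx hy

/-- `S(ξ) = ε(ξ)ι(ξ) − ι(ξ)ε(ξ)`. -/
def SOp (ξ : Vn n) : ExteriorAlgebra ℝ (Vn n) →ₗ[ℝ] ExteriorAlgebra ℝ (Vn n) :=
  eps ξ ∘ₗ iot ξ - iot ξ ∘ₗ eps ξ

lemma SOp_mem (ξ : Vn n) (m : ℕ) :
    ∀ x ∈ ⋀[ℝ]^m (Vn n), SOp ξ x ∈ ⋀[ℝ]^m (Vn n) := by
  intro x hx
  have h2 : iot ξ (eps ξ x) ∈ ⋀[ℝ]^m (Vn n) := iot_mem ξ m _ (eps_mem ξ m x hx)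
  have h1 : eps ξ (iot ξ x) ∈ ⋀[ℝ]^m (Vn n) := by
    match m with
    | 0 => rw [iot_zero_mem ξ x hx, map_zero]; exact Submodule.zero_mem _
    | k+1 => exact eps_mem ξ k _ (iot_mem ξ k x hx)
  simpa [SOp, LinearMap.sub_apply, LinearMap.comp_apply] using sub_mem h1 h2

/-- `S(ξ)` restricted to `m`-forms. -/
def SRes (ξ : Vn n) (m : ℕ) : ⋀[ℝ]^m (Vn n) →ₗ[ℝ] ⋀[ℝ]^m (Vn n) :=
  (SOp ξ).restrict (SOp_mem ξ m)

/-- The leading symbol `σ(ξ) = |ξ|⁻²(ε(ξ)ι(ξ) − ι(ξ)ε(ξ))`. -/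
def sigmaOp (ξ : Vn n) : ExteriorAlgebra ℝ (Vn n) →ₗ[ℝ] ExteriorAlgebra ℝ (Vn n) :=
  (‖ξ‖ ^ 2)⁻¹ • SOp ξ

lemma sigmaOp_mem (ξ : Vn n) (m : ℕ) :
    ∀ x ∈ ⋀[ℝ]^m (Vn n), sigmaOp ξ x ∈ ⋀[ℝ]^m (Vn n) := by
  intro x hx
  simpa [sigmaOp] using Submodule.smul_mem _ _ (SOp_mem ξ m x hx)

/-- `σ(ξ)` restricted to `m`-forms. -/
def sigmaR (ξ : Vn n) (m : ℕ) : ⋀[ℝ]^m (Vn n) →ₗ[ℝ] ⋀[ℝ]^m (Vn n) :=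
  (sigmaOp ξ).restrict (sigmaOp_mem ξ m)

/-- `ε(ξ₁)ι(ξ₂)ε(η₁)ι(η₂)`. -/
def quad (ξ₁ ξ₂ η₁ η₂ : Vn n) : ExteriorAlgebra ℝ (Vn n) →ₗ[ℝ] ExteriorAlgebra ℝ (Vn n) :=
  eps ξ₁ ∘ₗ iot ξ₂ ∘ₗ eps η₁ ∘ₗ iot η₂

lemma quad_mem (ξ₁ ξ₂ η₁ η₂ : Vn n) (m : ℕ) :
    ∀ x ∈ ⋀[ℝ]^m (Vn n), quad ξ₁ ξ₂ η₁ η₂ x ∈ ⋀[ℝ]^m (Vn n) := by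
  intro x hx
  have hq : quad ξ₁ ξ₂ η₁ η₂ x = eps ξ₁ (iot ξ₂ (eps η₁ (iot η₂ x))) := rfl
  match m with
  | 0 =>
    rw [hq, iot_zero_mem η₂ x hx]
    simp only [map_zero]
    exact Submodule.zero_mem _
  | k+1 =>
    rw [hq]
    exact eps_mem _ k _ (iot_mem _ k _ (eps_mem _ k _ (iot_mem _ k x hx)))

/-- `ε(ξ₁)ι(ξ₂)ε(η₁)ι(η₂)` restricted to `m`-forms. -/
def bV (n : ℕ) : Module.Basis (Fin n) ℝ (Vn n) := (EuclideanSpace.basisFun (Fin n) ℝ).toBasis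

def wfam (n m : ℕ) (s : {s : Finset (Fin n) // s.card = m}) : ExteriorAlgebra ℝ (Vn n) :=
  ιMulti ℝ m (fun i => bV n (s.1.orderIsoOfFin s.2 i))

def coordA (n m : ℕ) (s : {s : Finset (Fin n) // s.card = m}) :
    (Vn n) [⋀^Fin m]→ₗ[ℝ] ℝ :=
  (Matrix.detRowAlternating).compLinearMap
    (LinearMap.pi fun i => (bV n).coord (s.1.orderIsoOfFin s.2 i))

lemma coord_bV (a b : Fin n) : (bV n).coord a (bV n b) = if a = b then 1 else 0 := by
  rw [Module.Basis.coord_apply, Module.Basis.repr_self, Finsupp.single_apply]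
  simp [eq_comm]

lemma dual_eval (m : ℕ) (s t : {s : Finset (Fin n) // s.card = m}) :
    liftAlternating (Function.update 0 m (coordA n m s)) (wfam n m t)
      = if s = t then 1 else 0 := by
  rw [wfam, liftAlternating_apply_ιMulti, Function.update_self]
  have hmat : (coordA n m s) (fun i => bV n (t.1.orderIsoOfFin t.2 i)) =
      Matrix.det (Matrix.of fun j i : Fin m =>
        if (s.1.orderIsoOfFin s.2 i : Fin n) = (t.1.orderIsoOfFin t.2 j : Fin n)
        then (1:ℝ) else 0) := by
    rw [coordA, AlternatingMap.compLinearMap_apply]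
    unfold Matrix.detRowAlternating
    congr 1
    ext j i
    simp [LinearMap.pi_apply, coord_bV, Module.Basis.coord_apply, Module.Basis.repr_self, Finsupp.single_apply, eq_comm]
    congr
  rw [hmat]
  by_cases hst : s = t
  · subst hst
    rw [if_pos rfl]
    have : (Matrix.of fun j i : Fin m =>
        if (s.1.orderIsoOfFin s.2 i : Fin n) = (s.1.orderIsoOfFin s.2 j : Fin n)
        then (1:ℝ) else 0) = 1 := by
      ext j i
      simp only [Matrix.of_apply, Matrix.one_apply]
      by_cases hij : i = j
      · simp [hij]
      · rw [if_neg, if_neg (Ne.symm hij)]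
        intro h
        exact hij (by
          have := (s.1.orderIsoOfFin s.2).injective (Subtype.ext h)
          exact this)
    rw [this, Matrix.det_one]
  · rw [if_neg hst]
    have hne : s.1 ≠ t.1 := fun h => hst (Subtype.ext h)
    have hns : ¬ s.1 ⊆ t.1 := by
      intro hsub
      exact hne (Finset.eq_of_subset_of_card_le hsub (by rw [s.2, t.2]))
    obtain ⟨a, ha, hat⟩ := Finset.not_subset.mp hns
    set σ := s.1.orderIsoOfFin s.2
    set i0 : Fin m := σ.symm ⟨a, ha⟩
    apply Matrix.det_eq_zero_of_column_eq_zero i0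
    intro j
    simp only [Matrix.of_apply]
    rw [if_neg]
    intro h
    have h1 : (σ i0 : Fin n) = a := by simp [i0, σ]
    rw [h1] at h
    exact hat (h ▸ (t.1.orderIsoOfFin t.2 j).2)

lemma wfam_indep (m : ℕ) : LinearIndependent ℝ (wfam n m) := by
  rw [Fintype.linearIndependent_iff]
  intro g hg t
  have := congrArg (liftAlternating (Function.update 0 m (coordA n m t))) hg
  rw [map_sum, map_zero] at this
  simp only [map_smul, dual_eval, smul_eq_mul] at this
  rw [Finset.sum_eq_single t] at this
  · simpa using this
  · intro b _ hb; rw [if_neg (Ne.symm hb), mul_zero]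
  · intro h; exact absurd (Finset.mem_univ t) h

lemma mem_span_wfam (m : ℕ) (r : Fin m → Fin n) :
    ιMulti ℝ m (fun i => bV n (r i)) ∈ Submodule.span ℝ (Set.range (wfam n m)) := by
  by_cases hr : Function.Injective r
  · set S : Finset (Fin n) := Finset.image r Finset.univ with hSdef
    have hS : S.card = m := by
      rw [hSdef, Finset.card_image_of_injective _ hr, Finset.card_univ, Fintype.card_fin]
    set σ := S.orderIsoOfFin hS
    have hmem : ∀ i, r i ∈ S := fun i => Finset.mem_image_of_mem r (Finset.mem_univ i)
    set p : Fin m → Fin m := fun i => σ.symm ⟨r i, hmem i⟩ with hp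
    have hpinj : Function.Injective p := by
      intro i j hij
      have := σ.symm.injective hij
      exact hr (congrArg Subtype.val this)
    set pe : Equiv.Perm (Fin m) := Equiv.ofBijective p
      ((Finite.injective_iff_bijective).mp hpinj)
    have hcomp : (fun i => bV n (r i)) = (fun i => bV n (σ i)) ∘ pe := by
      funext i
      have : (σ (pe i) : Fin n) = r i := by
        show (σ (p i) : Fin n) = r i
        rw [hp]
        simp
      simp [Function.comp, this]
    rw [hcomp, AlternatingMap.map_perm]
    have hw : (ιMulti ℝ m) (fun i => bV n (σ i)) = wfam n m ⟨S, hS⟩ := rfl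
    rw [hw]
    have hwmem : wfam n m ⟨S, hS⟩ ∈ Submodule.span ℝ (Set.range (wfam n m)) :=
      Submodule.subset_span (Set.mem_range_self _)
    rcases Int.units_eq_one_or (Equiv.Perm.sign pe) with h | h
    · rw [h, one_smul]; exact hwmem
    · rw [h]
      show (-1 : ℤˣ) • _ ∈ _
      rw [Units.neg_smul, one_smul]
      exact neg_mem hwmem
  · rw [AlternatingMap.map_eq_zero_of_not_injective _ _ (by
      intro h
      exact hr (fun i j hij => h (congrArg (bV n) hij)))]
    exact Submodule.zero_mem _

lemma span_wfam (m : ℕ) :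
    Submodule.span ℝ (Set.range (wfam n m)) = ⋀[ℝ]^m (Vn n) := by
  apply le_antisymm
  · rw [Submodule.span_le]
    rintro _ ⟨s, rfl⟩
    exact ιMulti_range ℝ m (Set.mem_range_self _)
  · rw [← ιMulti_span_fixedDegree, Submodule.span_le]
    rintro _ ⟨v, rfl⟩
    have hv : (ιMulti ℝ m) v =
        (ιMulti ℝ m) (fun i => ∑ j, (bV n).repr (v i) j • bV n j) := by
      congr 1
      funext i
      exact ((bV n).sum_repr (v i)).symm
    rw [hv]
    have := MultilinearMap.map_sum ((ιMulti ℝ m (M := Vn n)).toMultilinearMap)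
      (fun i j => (bV n).repr (v i) j • bV n j)
    rw [show ((ιMulti ℝ m) fun i => ∑ j, (bV n).repr (v i) j • bV n j)
        = ((ιMulti ℝ m (M := Vn n)).toMultilinearMap fun i => ∑ j, (bV n).repr (v i) j • bV n j) from rfl,
      this]
    apply Submodule.sum_mem
    intro r _
    rw [MultilinearMap.map_smul_univ]
    exact Submodule.smul_mem _ _ (mem_span_wfam m r)

def basisExt (n m : ℕ) : Module.Basis {s : Finset (Fin n) // s.card = m} ℝ (⋀[ℝ]^m (Vn n)) :=
  (Module.Basis.span (wfam_indep m)).map (LinearEquiv.ofEq _ _ (span_wfam m))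

instance instFD (n m : ℕ) : FiniteDimensional ℝ (⋀[ℝ]^m (Vn n)) :=
  Module.Finite.of_basis (basisExt n m)

instance instModFin (n m : ℕ) : Module.Finite ℝ (⋀[ℝ]^m (Vn n)) :=
  Module.Finite.of_basis (basisExt n m)

instance instModFree (n m : ℕ) : Module.Free ℝ (⋀[ℝ]^m (Vn n)) :=
  Module.Free.of_basis (basisExt n m)

lemma finrank_ext (n m : ℕ) : Module.finrank ℝ (⋀[ℝ]^m (Vn n)) = n.choose m := by
  rw [Module.finrank_eq_card_basis (basisExt n m)]
  rw [Fintype.card_of_subtype (Finset.univ.powersetCard m)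
    (fun x => Finset.mem_powersetCard_univ)]
  rw [Finset.card_powersetCard, Finset.card_univ, Fintype.card_fin]


section TracePart

variable {n : ℕ}

/-- `ε(ξ)ι(ξ)`. -/
def TOp (ξ : Vn n) : ExteriorAlgebra ℝ (Vn n) →ₗ[ℝ] ExteriorAlgebra ℝ (Vn n) :=
  eps ξ ∘ₗ iot ξ

lemma TOp_mem (ξ : Vn n) (m : ℕ) :
    ∀ x ∈ ⋀[ℝ]^m (Vn n), TOp ξ x ∈ ⋀[ℝ]^m (Vn n) := by
  intro x hx
  match m with
  | 0 =>
    show eps ξ (iot ξ x) ∈ _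
    rw [iot_zero_mem ξ x hx, map_zero]; exact Submodule.zero_mem _
  | k+1 => exact eps_mem ξ k _ (iot_mem ξ k x hx)

def TR (ξ : Vn n) (m : ℕ) : ⋀[ℝ]^m (Vn n) →ₗ[ℝ] ⋀[ℝ]^m (Vn n) :=
  (TOp ξ).restrict (TOp_mem ξ m)

def ER (ξ : Vn n) (m : ℕ) : ⋀[ℝ]^m (Vn n) →ₗ[ℝ] ⋀[ℝ]^(m+1) (Vn n) :=
  (eps ξ).restrict (eps_mem ξ m)

def IR (ξ : Vn n) (m : ℕ) : ⋀[ℝ]^(m+1) (Vn n) →ₗ[ℝ] ⋀[ℝ]^m (Vn n) :=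
  (iot ξ).restrict (iot_mem ξ m)

lemma anticomm (ξ : Vn n) (x : ExteriorAlgebra ℝ (Vn n)) :
    iot ξ (eps ξ x) = (‖ξ‖^2 : ℝ) • x - eps ξ (iot ξ x) := by
  have h := CliffordAlgebra.contractLeft_ι_mul (Q := (0 : QuadraticForm ℝ (Vn n)))
    (d := (innerSL ℝ ξ).toLinearMap) ξ x
  have h2 : ((innerSL ℝ ξ).toLinearMap) ξ = (‖ξ‖^2 : ℝ) := by
    rw [ContinuousLinearMap.coe_coe, innerSL_apply_apply]
    exact real_inner_self_eq_norm_sq ξ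
  rw [h2] at h
  exact h

lemma TR_zero (ξ : Vn n) : TR ξ 0 = 0 := by
  apply LinearMap.ext; intro x
  have : TOp ξ (x : ExteriorAlgebra ℝ (Vn n)) = 0 := by
    show eps ξ (iot ξ (x : ExteriorAlgebra ℝ (Vn n))) = 0
    rw [iot_zero_mem ξ _ x.2, map_zero]
  simp [TR, LinearMap.restrict_apply, this]

lemma TR_succ (ξ : Vn n) (m : ℕ) : TR ξ (m+1) = ER ξ m ∘ₗ IR ξ m := by
  ext x
  simp [TR, ER, IR, LinearMap.restrict_apply, TOp]

lemma TU (ξ : Vn n) (m : ℕ) :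
    TR ξ m + IR ξ m ∘ₗ ER ξ m = (‖ξ‖^2 : ℝ) • (LinearMap.id : ⋀[ℝ]^m (Vn n) →ₗ[ℝ] _) := by
  apply LinearMap.ext; intro x; apply Subtype.ext
  simp only [LinearMap.add_apply, LinearMap.comp_apply, LinearMap.smul_apply, LinearMap.id_apply,
    TR, ER, IR, LinearMap.restrict_apply, TOp, Submodule.coe_add, Submodule.coe_smul,
    SetLike.mk_smul_mk]
  show eps ξ (iot ξ (x : ExteriorAlgebra ℝ (Vn n))) + iot ξ (eps ξ (x : ExteriorAlgebra ℝ (Vn n)))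
      = (‖ξ‖^2 : ℝ) • (x : ExteriorAlgebra ℝ (Vn n))
  rw [anticomm]
  abel

lemma SRes_eq (ξ : Vn n) (m : ℕ) :
    SRes ξ m = TR ξ m - IR ξ m ∘ₗ ER ξ m := by
  ext x
  rfl

lemma trace_U (ξ : Vn n) (m : ℕ) :
    LinearMap.trace ℝ (⋀[ℝ]^m (Vn n)) (IR ξ m ∘ₗ ER ξ m)
      = LinearMap.trace ℝ (⋀[ℝ]^(m+1) (Vn n)) (TR ξ (m+1)) := by
  rw [TR_succ, LinearMap.trace_comp_comm']

lemma trace_TU (ξ : Vn n) (m : ℕ) :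
    LinearMap.trace ℝ (⋀[ℝ]^m (Vn n)) (TR ξ m)
      + LinearMap.trace ℝ (⋀[ℝ]^(m+1) (Vn n)) (TR ξ (m+1))
      = ‖ξ‖^2 * (n.choose m : ℝ) := by
  rw [← trace_U]
  have := congrArg (LinearMap.trace ℝ (⋀[ℝ]^m (Vn n))) (TU ξ m)
  rw [map_add, map_smul, LinearMap.trace_id, finrank_ext] at this
  simpa using this

lemma trace_T_formula (ξ : Vn n) (m : ℕ) :
    LinearMap.trace ℝ (⋀[ℝ]^m (Vn n)) (TR ξ m)
      = ‖ξ‖^2 * ∑ j ∈ Finset.range m, (-1 : ℝ) ^ j * (n.choose (m - 1 - j)) := by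
  induction m with
  | zero => simp [TR_zero]
  | succ k ih =>
    have h := trace_TU ξ k
    rw [ih] at h
    have hsum : ∑ j ∈ Finset.range (k+1), (-1 : ℝ) ^ j * (n.choose (k - j))
        = (n.choose k : ℝ) - ∑ j ∈ Finset.range k, (-1 : ℝ) ^ j * (n.choose (k - 1 - j)) := by
      rw [Finset.sum_range_succ']
      have h1 : ∀ j ∈ Finset.range k, (-1 : ℝ) ^ (j+1) * (n.choose (k - (j+1)))
          = -((-1 : ℝ) ^ j * (n.choose (k - 1 - j))) := by
        intro j _
        have hkj : k - (j + 1) = k - 1 - j := by omega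
        rw [hkj, pow_succ]; ring
      rw [Finset.sum_congr rfl h1, Finset.sum_neg_distrib]
      simp only [pow_zero, Nat.sub_zero, one_mul]
      ring
    have hms : ∀ j, k + 1 - 1 - j = k - j := by omega
    rw [Finset.sum_congr rfl (fun j _ => by rw [hms j]), hsum]
    linarith

end TracePart

variable {n : ℕ}

def quadR (ξ₁ ξ₂ η₁ η₂ : Vn n) (m : ℕ) : ⋀[ℝ]^m (Vn n) →ₗ[ℝ] ⋀[ℝ]^m (Vn n) :=
  (quad ξ₁ ξ₂ η₁ η₂).restrict (quad_mem ξ₁ ξ₂ η₁ η₂ m)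


/-- the trace of `σ(ξ) = |ξ|⁻²(ε(ξ)ι(ξ) − ι(ξ)ε(ξ))` on `Λᵐ` equals
`2 A_{n,m−1} − C(n,m)`, independently of the nonzero covector `ξ`. -/
theorem statement7 {n : ℕ} (m : ℕ) (ξ : Vn n) (hξ : ξ ≠ 0) :
    LinearMap.trace ℝ (⋀[ℝ]^m (Vn n)) (sigmaR ξ m)
      = 2 * (∑ j ∈ Finset.range m, (-1 : ℝ) ^ j * (n.choose (m - 1 - j)))
        - (n.choose m : ℝ) := by
  have hns : (‖ξ‖^2 : ℝ) ≠ 0 := by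
    have : ‖ξ‖ ≠ 0 := norm_ne_zero_iff.mpr hξ
    positivity
  have hsig : sigmaR ξ m = ((‖ξ‖^2 : ℝ)⁻¹) • SRes ξ m := by
    ext x
    rfl
  have hS : LinearMap.trace ℝ (⋀[ℝ]^m (Vn n)) (SRes ξ m)
      = 2 * (‖ξ‖^2 * ∑ j ∈ Finset.range m, (-1 : ℝ) ^ j * (n.choose (m - 1 - j)))
        - ‖ξ‖^2 * (n.choose m : ℝ) := by
    rw [SRes_eq, (LinearMap.trace ℝ (⋀[ℝ]^m (Vn n))).map_sub (TR ξ m) (IR ξ m ∘ₗ ER ξ m),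
      trace_U, trace_T_formula]
    have h := trace_TU ξ m
    rw [trace_T_formula] at h
    linarith
  rw [hsig, map_smul, hS, smul_eq_mul]
  linear_combination (2 * (∑ j ∈ Finset.range m, (-1 : ℝ) ^ j * (n.choose (m - 1 - j)))
    - (n.choose m : ℝ)) * inv_mul_cancel₀ hns
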